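/- Let δ⁻, δ⁺, δ be real numbers with 0 < δ⁻ < 1 < δ⁺ and δ⁻ ≤ δ ≤ δ⁺, and let t be any real number. Define ε₆ = (t²/(t² + 1)) · (δ² − 1). Then δ²·t² + 1 = (t² + 1)·(1 + ε₆), and (δ⁻)² − 1 < ε₆ < (δ⁺)² − 1, and δ⁻ < √(1 + ε₆) < δ⁺. -/
import Mathlib


theorem epsilon_six_bounds (dm dp d t : ℝ) (hdm0 : 0 < dm) (hdm : dm < 1) (hdp : 1 < dp)
    (hd₁ : dm ≤ d) (hd₂ : d ≤ dp) :
    d ^ 2 * t ^ 2 + 1 = (t ^ 2 + 1) * (1 + t ^ 2 / (t ^ 2 + 1) * (d ^ 2 - 1)) ∧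
    dm ^ 2 - 1 < t ^ 2 / (t ^ 2 + 1) * (d ^ 2 - 1) ∧
    t ^ 2 / (t ^ 2 + 1) * (d ^ 2 - 1) < dp ^ 2 - 1 ∧
    dm < Real.sqrt (1 + t ^ 2 / (t ^ 2 + 1) * (d ^ 2 - 1)) ∧
    Real.sqrt (1 + t ^ 2 / (t ^ 2 + 1) * (d ^ 2 - 1)) < dp := by
  have ht : (0:ℝ) ≤ t ^ 2 := sq_nonneg t
  have ht1 : (0:ℝ) < t ^ 2 + 1 := by linarith
  have hε : t ^ 2 / (t ^ 2 + 1) * (d ^ 2 - 1) = t ^ 2 * (d ^ 2 - 1) / (t ^ 2 + 1) := by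
    ring
  have h1 : d ^ 2 * t ^ 2 + 1 = (t ^ 2 + 1) * (1 + t ^ 2 / (t ^ 2 + 1) * (d ^ 2 - 1)) := by
    field_simp
    ring
  have hlo : dm ^ 2 - 1 < t ^ 2 / (t ^ 2 + 1) * (d ^ 2 - 1) := by
    rw [hε, lt_div_iff₀ ht1]
    nlinarith [sq_nonneg t, sq_nonneg (d - dm), mul_nonneg ht (sub_nonneg.2 (by nlinarith : dm ^ 2 ≤ d ^ 2))]
  have hhi : t ^ 2 / (t ^ 2 + 1) * (d ^ 2 - 1) < dp ^ 2 - 1 := by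
    rw [hε, div_lt_iff₀ ht1]
    nlinarith [mul_nonneg ht (sub_nonneg.2 (by nlinarith : d ^ 2 ≤ dp ^ 2))]
  refine ⟨h1, hlo, hhi, ?_, ?_⟩
  · rw [show dm = Real.sqrt (dm ^ 2) by rw [Real.sqrt_sq hdm0.le]]
    exact Real.sqrt_lt_sqrt (sq_nonneg dm) (by linarith)
  · rw [show dp = Real.sqrt (dp ^ 2) by rw [Real.sqrt_sq (by linarith)]]
    exact Real.sqrt_lt_sqrt (by nlinarith) (by linarith)
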